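/- Discrete error bound (inequality (4.13) in the proof of Theorem 4.5). Under the hypotheses in the context, there exists a constant C > 0 depending only on Ca, Cb, α, β such that ‖Πu − u_h‖ + ‖Π^W p − p_h‖ ≤ C(‖Π̃u − u‖ + ‖Πu − u‖ + E_c + E_σ). -/

import Mathlib

/-- Discrete error bound, inequality (4.13) in the paper
(proof of Theorem 4.5): there is a constant `C > 0`, depending only
on the continuity, coercivity and inf-sup constants `Ca, Cb, α, β`, such that
`‖Πu − u_h‖ + ‖Π^W p − p_h‖ ≤ C (‖Π̃u − u‖ + ‖Πu − u‖ + E_c + E_σ)`. -/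
theorem flux_mortar_discrete_error_bound :
    ∀ (Ca Cb α β : ℝ), 0 < Ca → 0 < Cb → 0 < α → 0 < β →
    ∃ C > (0 : ℝ),
      ∀ (X W : Type) [NormedAddCommGroup X] [NormedSpace ℝ X]
        [NormedAddCommGroup W] [NormedSpace ℝ W]
        (Vh : Submodule ℝ X) (Wh : Submodule ℝ W),
        FiniteDimensional ℝ Vh → FiniteDimensional ℝ Wh →
      ∀ (a ah : X →ₗ[ℝ] X →ₗ[ℝ] ℝ) (b : X →ₗ[ℝ] W →ₗ[ℝ] ℝ),
        (∀ x y : X, |a x y| ≤ Ca * ‖x‖ * ‖y‖) →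
        (∀ x y : X, |ah x y| ≤ Ca * ‖x‖ * ‖y‖) →
        (∀ (x : X) (w : W), |b x w| ≤ Cb * ‖x‖ * ‖w‖) →
        (∀ v ∈ Vh, (∀ w ∈ Wh, b v w = 0) → ah v v ≥ α * ‖v‖ ^ 2) →
        (∀ w ∈ Wh, ∃ v ∈ Vh, v ≠ 0 ∧ b v w ≥ β * ‖v‖ * ‖w‖) →
      ∀ (F : W →ₗ[ℝ] ℝ) (u : X) (p : W) (uh : X) (ph : W)
        (Pu Ptu : X) (PWp : W) (Ec Eσ : ℝ),
        (∀ w ∈ Wh, b u w = F w) →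
        uh ∈ Vh → ph ∈ Wh →
        (∀ vh ∈ Vh, ah uh vh - b vh ph = 0) →
        (∀ w ∈ Wh, b uh w = F w) →
        Pu ∈ Vh → (∀ w ∈ Wh, b (u - Pu) w = 0) →
        PWp ∈ Wh → (∀ vh ∈ Vh, b vh (p - PWp) = 0) →
        0 ≤ Ec → 0 ≤ Eσ →
        (∀ vh ∈ Vh, |a u vh - b vh p| ≤ Ec * ‖vh‖) →
        (∀ vh ∈ Vh, |a Ptu vh - ah Ptu vh| ≤ Eσ * ‖vh‖) →
        ‖Pu - uh‖ + ‖PWp - ph‖ ≤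
          C * (‖Ptu - u‖ + ‖Pu - u‖ + Ec + Eσ) := by
  intro Ca Cb α β hCa hCb hα hβ
  refine ⟨(2*Ca+1)/α + (2*Ca+1+Ca*((2*Ca+1)/α))/β, by positivity, ?_⟩
  intro X W _ _ _ _ Vh Wh _ _ a ah b hA hAh hB hcoer hinfsup F u p uh ph Pu Ptu PWp Ec Eσ
    hbu huh hph hdisc1 hdisc2 hPu hPuorth hPWp hPWporth hEc hEσ hcons hquad
  set t := ‖Ptu - u‖ with ht
  set s := ‖Pu - u‖ with hs
  have hts : (0:ℝ) ≤ t := norm_nonneg _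
  have hss : (0:ℝ) ≤ s := norm_nonneg _
  set e := Pu - uh with he
  have heV : e ∈ Vh := Vh.sub_mem hPu huh
  -- the error e has zero b against Wh
  have hbe : ∀ w ∈ Wh, b e w = 0 := by
    intro w hw
    have h1 := hPuorth w hw
    have h2 := hbu w hw
    have h3 := hdisc2 w hw
    simp only [map_sub, LinearMap.sub_apply, he] at h1 ⊢
    linarith
  have hbep : b e p = 0 := by
    have h1 := hPWporth e heV
    have h2 := hbe PWp hPWp
    simp only [map_sub] at h1
    linarith
  have hbeph : b e ph = 0 := hbe ph hph
  have hbePW : b e PWp = 0 := hbe PWp hPWp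
  -- coercivity
  have hco : α * ‖e‖ ^ 2 ≤ ah e e := hcoer e heV hbe
  -- key identity for ah e e
  have hid : ah e e = ah (Pu - Ptu) e + (ah Ptu e - a Ptu e) + a (Ptu - u) e
      + (a u e - b e p) + b e p - (ah uh e - b e ph) - b e ph := by
    simp only [he, map_sub, LinearMap.sub_apply]
    ring
  -- bounds on each piece
  have hPuPtu : ‖Pu - Ptu‖ ≤ s + t := by
    have : Pu - Ptu = (Pu - u) - (Ptu - u) := by abel
    rw [this]
    exact norm_sub_le _ _
  have hb1 : ah (Pu - Ptu) e ≤ Ca * (s + t) * ‖e‖ := by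
    have h := le_of_abs_le (hAh (Pu - Ptu) e)
    have h2 : Ca * ‖Pu - Ptu‖ * ‖e‖ ≤ Ca * (s + t) * ‖e‖ :=
      mul_le_mul_of_nonneg_right (mul_le_mul_of_nonneg_left hPuPtu hCa.le) (norm_nonneg e)
    linarith
  have hb2 : ah Ptu e - a Ptu e ≤ Eσ * ‖e‖ := by
    have h := hquad e heV
    rw [abs_sub_comm] at h
    exact le_of_abs_le h
  have hb3 : a (Ptu - u) e ≤ Ca * t * ‖e‖ := by
    have h := le_of_abs_le (hA (Ptu - u) e)
    exact h
  have hb4 : a u e - b e p ≤ Ec * ‖e‖ := le_of_abs_le (hcons e heV)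
  have hd1 : ah uh e - b e ph = 0 := hdisc1 e heV
  -- hence α ‖e‖² ≤ K ‖e‖
  have hE2 : α * ‖e‖ ^ 2 ≤ (Ca * (s + t) + Eσ + Ca * t + Ec) * ‖e‖ := by
    rw [hid] at hco
    linarith
  have hK : (0:ℝ) ≤ Ca * (s + t) + Eσ + Ca * t + Ec := by positivity
  have hE : α * ‖e‖ ≤ Ca * (s + t) + Eσ + Ca * t + Ec := by
    rcases (norm_nonneg e).eq_or_lt with h0 | h0
    · rw [← h0]; simpa using hK
    · exact (mul_le_mul_iff_of_pos_right h0).mp (by nlinarith [hE2] : (α * ‖e‖) * ‖e‖ ≤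
        (Ca * (s + t) + Eσ + Ca * t + Ec) * ‖e‖)
  have hE' : ‖e‖ ≤ (2*Ca+1)/α * (t+s+Ec+Eσ) := by
    rw [div_mul_eq_mul_div, le_div_iff₀ hα]
    linarith [mul_nonneg hCa.le hts, mul_nonneg hCa.le hss,
      mul_nonneg hCa.le hEc, mul_nonneg hCa.le hEσ, hE]
  -- pressure error
  obtain ⟨v, hvV, hvne, hbvq⟩ := hinfsup (PWp - ph) (Wh.sub_mem hPWp hph)
  have hvpos : (0:ℝ) < ‖v‖ := norm_pos_iff.mpr hvne
  have hidq : b v (PWp - ph) = -(b v (p - PWp)) + (b v p - a u v) + a (u - Ptu) v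
      + (a Ptu v - ah Ptu v) + ah (Ptu - Pu) v + ah e v + (ah uh v - b v ph) := by
    simp only [he, map_sub, LinearMap.sub_apply]
    ring
  have hq1 : b v (p - PWp) = 0 := hPWporth v hvV
  have hq2 : b v p - a u v ≤ Ec * ‖v‖ := by
    have h := hcons v hvV
    rw [abs_sub_comm] at h
    exact le_of_abs_le h
  have hq3 : a (u - Ptu) v ≤ Ca * t * ‖v‖ := by
    have h := le_of_abs_le (hA (u - Ptu) v)
    rw [norm_sub_rev] at h
    exact h
  have hq4 : a Ptu v - ah Ptu v ≤ Eσ * ‖v‖ := le_of_abs_le (hquad v hvV)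
  have hq5 : ah (Ptu - Pu) v ≤ Ca * (s + t) * ‖v‖ := by
    have h := le_of_abs_le (hAh (Ptu - Pu) v)
    rw [norm_sub_rev] at h
    have h2 : Ca * ‖Pu - Ptu‖ * ‖v‖ ≤ Ca * (s + t) * ‖v‖ :=
      mul_le_mul_of_nonneg_right (mul_le_mul_of_nonneg_left hPuPtu hCa.le) (norm_nonneg v)
    linarith
  have hq6 : ah e v ≤ Ca * ‖e‖ * ‖v‖ := le_of_abs_le (hAh e v)
  have hq7 : ah uh v - b v ph = 0 := hdisc1 v hvV
  have hQmul : (β * ‖PWp - ph‖) * ‖v‖ ≤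
      (Ec + Ca * t + Eσ + Ca * (s + t) + Ca * ‖e‖) * ‖v‖ := by
    have hlow : β * ‖v‖ * ‖PWp - ph‖ ≤ b v (PWp - ph) := hbvq
    rw [hidq, hq1, hq7] at hlow
    linarith
  have hQ : β * ‖PWp - ph‖ ≤ Ec + Ca * t + Eσ + Ca * (s + t) + Ca * ‖e‖ :=
    (mul_le_mul_iff_of_pos_right hvpos).mp hQmul
  have hQ' : ‖PWp - ph‖ ≤ (2*Ca+1+Ca*((2*Ca+1)/α))/β * (t+s+Ec+Eσ) := by
    rw [div_mul_eq_mul_div, le_div_iff₀ hβ]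
    have hCe : Ca * ‖e‖ ≤ Ca * ((2*Ca+1)/α * (t+s+Ec+Eσ)) :=
      mul_le_mul_of_nonneg_left hE' hCa.le
    linarith [mul_nonneg hCa.le hts, mul_nonneg hCa.le hss,
      mul_nonneg hCa.le hEc, mul_nonneg hCa.le hEσ, hQ, hCe]
  calc ‖Pu - uh‖ + ‖PWp - ph‖ = ‖e‖ + ‖PWp - ph‖ := by rw [he]
    _ ≤ (2*Ca+1)/α * (t+s+Ec+Eσ) + (2*Ca+1+Ca*((2*Ca+1)/α))/β * (t+s+Ec+Eσ) := add_le_add hE' hQ'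
    _ = ((2*Ca+1)/α + (2*Ca+1+Ca*((2*Ca+1)/α))/β) * (t+s+Ec+Eσ) := by ring
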